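/- Let f be a quasiperiodically forced monotone interval map (fibers f_θ : [a,b] → [a,b] monotone increasing) over an irrational rotation, and let 𝒜 ⊆ 𝕋¹ × [a,b] be a compact invariant set without isolated points such that f|_𝒜 is transitive and supports a fully-supported finite invariant measure. Then either f|_𝒜 has sensitive dependence on initial conditions, or 𝒜 is the graph of a continuous function. -/

import Mathlib

open MeasureTheory

section Aux


variable {X : Type*} [MetricSpace X] {f : X → X} {A : Set X}

/-- Uniform continuity of all iterates up to `N` on a compact set, simultaneously. -/
lemma aux_iter_ucont (hA : IsCompact A) (hcont : Continuous f)
    (N : ℕ) {ε : ℝ} (hε : 0 < ε) :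
    ∃ δ > 0, ∀ n ≤ N, ∀ p ∈ A, ∀ q ∈ A, dist p q ≤ δ →
      dist (f^[n] p) (f^[n] q) ≤ ε := by
  induction N with
  | zero =>
    exact ⟨ε, hε, by rintro n hn p hp q hq hd; interval_cases n; simpa using hd⟩
  | succ N ih =>
    obtain ⟨δ₁, hδ₁, h₁⟩ := ih
    have hu : UniformContinuousOn f^[N+1] A :=
      hA.uniformContinuousOn_of_continuous (hcont.iterate (N+1)).continuousOn
    rw [Metric.uniformContinuousOn_iff_le] at hu
    obtain ⟨δ₂, hδ₂, h₂⟩ := hu ε hε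
    refine ⟨min δ₁ δ₂, lt_min hδ₁ hδ₂, fun n hn p hp q hq hd => ?_⟩
    rcases Nat.lt_or_ge n (N+1) with h | h
    · exact h₁ n (Nat.lt_succ_iff.mp h) p hp q hq (hd.trans (min_le_left _ _))
    · have : n = N + 1 := le_antisymm hn h
      subst this
      exact h₂ p hp q hq (hd.trans (min_le_right _ _))

end Aux

section Aux2


variable {X : Type*} [MetricSpace X] [MeasurableSpace X] [BorelSpace X]

/-- Syndeticity of the set of return times of a positive measure set
(Furstenberg's elementary argument). -/
lemma aux_syndetic (f : X → X) (hcont : Continuous f)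
    (μ : Measure X) [IsFiniteMeasure μ]
    (hμinv : ∀ s, MeasurableSet s → μ (f ⁻¹' s) = μ s)
    (U : Set X) (hUm : MeasurableSet U) (hU : 0 < μ U) :
    ∃ K : ℕ, ∀ m : ℕ, ∃ n : ℕ, m ≤ n ∧ n ≤ m + K ∧ 0 < μ (U ∩ f^[n] ⁻¹' U) := by
  have hmeas : ∀ n : ℕ, ∀ s : Set X, MeasurableSet s → MeasurableSet (f^[n] ⁻¹' s) := by
    intro n s hs
    exact (hcont.iterate n).measurable hs
  have hinvn : ∀ n : ℕ, ∀ s : Set X, MeasurableSet s → μ (f^[n] ⁻¹' s) = μ s := by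
    intro n
    induction n with
    | zero => intro s _; simp
    | succ n ih =>
      intro s hs
      have : f^[n+1] ⁻¹' s = f ⁻¹' (f^[n] ⁻¹' s) := by
        rw [Function.iterate_succ]
        rfl
      rw [this, hμinv _ (hmeas n s hs), ih s hs]
  by_contra hcon
  push_neg at hcon
  -- for each K there's an interval [m, m+K] with no positive returns
  have hbad : ∀ K : ℕ, ∃ m : ℕ, ∀ n : ℕ, m ≤ n → n ≤ m + K → μ (U ∩ f^[n] ⁻¹' U) = 0 := by
    intro K
    obtain ⟨m, hm⟩ := hcon K
    exact ⟨m, fun n h1 h2 => le_antisymm (hm n h1 h2) zero_le⟩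
  classical
  choose g hg using hbad
  -- greedy sequence
  let b : ℕ → ℕ := fun k => Nat.rec 0 (fun _ prev => g (prev + 1) + prev + 1) k
  have hb_succ : ∀ k, b (k+1) = g (b k + 1) + b k + 1 := fun k => rfl
  have hb_mono : StrictMono b := strictMono_nat_of_lt_succ (fun k => by
    rw [hb_succ]; omega)
  have hdiff : ∀ i j : ℕ, i < j → μ (U ∩ f^[b j - b i] ⁻¹' U) = 0 := by
    intro i j hij
    obtain ⟨k, rfl⟩ : ∃ k, j = k + 1 := ⟨j - 1, by omega⟩
    have hib : b i ≤ b k := by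
      rcases Nat.lt_or_ge i k with h | h
      · exact (hb_mono h).le
      · have : i = k := by omega
        subst this; rfl
    have h1 : g (b k + 1) ≤ b (k+1) - b i := by rw [hb_succ]; omega
    have h2 : b (k+1) - b i ≤ g (b k + 1) + (b k + 1) := by rw [hb_succ]; omega
    exact hg (b k + 1) _ h1 h2
  -- the preimages f^[b i]⁻¹ U are pairwise a.e. disjoint, each of measure μ U
  have hVmeas : ∀ i : ℕ, MeasurableSet (f^[b i] ⁻¹' U) := fun i => hmeas _ _ hUm
  have hVμ : ∀ i : ℕ, μ (f^[b i] ⁻¹' U) = μ U := fun i => hinvn _ _ hUm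
  have hVdisj : ∀ i j : ℕ, i < j → μ (f^[b i] ⁻¹' U ∩ f^[b j] ⁻¹' U) = 0 := by
    intro i j hij
    have hd : b j = (b j - b i) + b i := by
      have := (hb_mono hij).le; omega
    have hcomp : f^[b j] ⁻¹' U = f^[b i] ⁻¹' (f^[b j - b i] ⁻¹' U) := by
      ext x
      simp only [Set.mem_preimage]
      rw [← Function.iterate_add_apply, ← hd]
    have : f^[b i] ⁻¹' U ∩ f^[b j] ⁻¹' U = f^[b i] ⁻¹' (U ∩ f^[b j - b i] ⁻¹' U) := by
      rw [hcomp, Set.preimage_inter]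
    rw [this, hinvn _ _ (hUm.inter (hmeas _ _ hUm)), hdiff i j hij]
  -- contradiction with finiteness
  obtain ⟨k, hk⟩ := ENNReal.exists_nat_mul_gt (ne_of_gt hU) (measure_ne_top μ Set.univ)
  have hsum : μ (⋃ i ∈ Finset.range k, f^[b i] ⁻¹' U) = ∑ i ∈ Finset.range k, μ (f^[b i] ⁻¹' U) := by
    apply measure_biUnion_finset₀
    · intro i _ j _ hij
      rcases Nat.lt_or_ge i j with h | h
      · exact hVdisj i j h
      · have h' : j < i := by omega
        have := hVdisj j i h'
        rwa [Set.inter_comm] at this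
    · exact fun i _ => (hVmeas i).nullMeasurableSet
  have hle : μ (⋃ i ∈ Finset.range k, f^[b i] ⁻¹' U) ≤ μ Set.univ :=
    measure_mono (Set.subset_univ _)
  rw [hsum] at hle
  simp only [hVμ, Finset.sum_const, Finset.card_range, nsmul_eq_mul] at hle
  exact absurd (lt_of_lt_of_le hk hle) (lt_irrefl _)

end Aux2

section Aux3

variable {X : Type*} [MetricSpace X] {f : X → X} {A : Set X} {xs : X}

/-- If the system is non-sensitive and `xs` has dense orbit, then `xs` has stable
balls at every scale. -/
lemma aux_stable (hA : IsCompact A) (hcont : Continuous f) (hmaps : Set.MapsTo f A A)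
    (hxs : xs ∈ A)
    (hdense : ∀ p ∈ A, ∀ r > 0, ∃ m : ℕ, dist (f^[m] xs) p ≤ r)
    (hstab : ∀ ε > 0, ∃ x ∈ A, ∃ δ > 0, ∀ y ∈ A, ∀ z ∈ A,
      dist x y ≤ δ → dist x z ≤ δ → ∀ n : ℕ, dist (f^[n] y) (f^[n] z) < ε) :
    ∀ ε > 0, ∃ δ > 0, ∀ y ∈ A, ∀ z ∈ A,
      dist xs y ≤ δ → dist xs z ≤ δ → ∀ n : ℕ, dist (f^[n] y) (f^[n] z) ≤ ε := by
  intro ε hε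
  obtain ⟨xe, hxe, δe, hδe, hst⟩ := hstab ε hε
  obtain ⟨m, hm⟩ := hdense xe hxe (δe/2) (by positivity)
  obtain ⟨δ, hδ, hu⟩ := aux_iter_ucont hA hcont m (show (0:ℝ) < min (δe/2) (ε/2) by positivity)
  refine ⟨δ, hδ, fun y hy z hz hdy hdz n => ?_⟩
  rcases Nat.lt_or_ge n m with h | h
  · calc dist (f^[n] y) (f^[n] z)
        ≤ dist (f^[n] y) (f^[n] xs) + dist (f^[n] xs) (f^[n] z) := dist_triangle _ _ _
      _ ≤ min (δe/2) (ε/2) + min (δe/2) (ε/2) := by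
          gcongr
          · exact (hu n h.le y hy xs hxs (by rwa [dist_comm]))
          · exact (hu n h.le xs hxs z hz hdz)
      _ ≤ ε/2 + ε/2 := by gcongr <;> exact min_le_right _ _
      _ = ε := by ring
  · obtain ⟨j, rfl⟩ : ∃ j, n = j + m := ⟨n - m, by omega⟩
    have hclose : ∀ w, w ∈ A → dist xs w ≤ δ → dist xe (f^[m] w) ≤ δe := by
      intro w hw hd
      calc dist xe (f^[m] w) ≤ dist xe (f^[m] xs) + dist (f^[m] xs) (f^[m] w) :=
            dist_triangle _ _ _
        _ ≤ δe/2 + min (δe/2) (ε/2) := by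
            gcongr
            · rwa [dist_comm]
            · exact hu m le_rfl xs hxs w hw hd
        _ ≤ δe/2 + δe/2 := by gcongr; exact min_le_left _ _
        _ = δe := by ring
    have h1 := hst (f^[m] y) (hmaps.iterate m hy) (f^[m] z) (hmaps.iterate m hz)
      (hclose y hy hdy) (hclose z hz hdz) j
    rw [← Function.iterate_add_apply, ← Function.iterate_add_apply] at h1
    exact h1.le

end Aux3

section Aux4

variable {X : Type*} [MetricSpace X] {f : X → X} {A : Set X} {xs : X}

/-- Uniform recurrence of the transitive point via syndetic return times. -/
lemma aux_recur [MeasurableSpace X] [BorelSpace X]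
    (hcont : Continuous f) (hxs : xs ∈ A)
    (μ : Measure X) [IsFiniteMeasure μ]
    (hμinv : ∀ s, MeasurableSet s → μ (f ⁻¹' s) = μ s)
    (hμA : μ Aᶜ = 0)
    (hball : ∀ r > 0, 0 < μ (Metric.ball xs r))
    (hstabxs : ∀ ε > 0, ∃ δ > 0, ∀ y ∈ A, ∀ z ∈ A,
      dist xs y ≤ δ → dist xs z ≤ δ → ∀ n : ℕ, dist (f^[n] y) (f^[n] z) ≤ ε) :
    ∀ ε > 0, ∃ K : ℕ, ∀ m : ℕ, ∃ r : ℕ, m ≤ r ∧ r ≤ m + K ∧ dist (f^[r] xs) xs ≤ ε := by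
  intro ε hε
  obtain ⟨δ, hδ, hst⟩ := hstabxs (ε/2) (by positivity)
  set δ0 := min δ (ε/2) with hδ0def
  have hδ0 : 0 < δ0 := lt_min hδ (by positivity)
  set U := Metric.ball xs (δ0/2) with hUdef
  have hU : 0 < μ U := hball _ (by positivity)
  obtain ⟨K, hK⟩ := aux_syndetic f hcont μ hμinv U Metric.isOpen_ball.measurableSet hU
  refine ⟨K, fun m => ?_⟩
  obtain ⟨n, h1, h2, h3⟩ := hK m
  have hne : ((U ∩ f^[n] ⁻¹' U) ∩ A).Nonempty := by
    rw [Set.nonempty_iff_ne_empty]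
    intro h
    have hsub : U ∩ f^[n] ⁻¹' U ⊆ Aᶜ := by
      intro x hx
      by_contra hxA
      rw [Set.notMem_compl_iff] at hxA
      exact Set.eq_empty_iff_forall_notMem.mp h x ⟨hx, hxA⟩
    have := (measure_mono hsub).trans_eq hμA
    exact absurd (h3.trans_le this) (lt_irrefl _)
  obtain ⟨u, ⟨huU, hufU⟩, huA⟩ := hne
  refine ⟨n, h1, h2, ?_⟩
  have hle1 : δ0 ≤ δ := min_le_left _ _
  have hle2 : δ0 ≤ ε/2 := min_le_right _ _
  have hd1 : dist (f^[n] xs) (f^[n] u) ≤ ε/2 := by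
    refine hst xs hxs u huA (by simp [hδ.le]) ?_ n
    rw [dist_comm]
    exact (Metric.mem_ball.mp huU).le.trans (by linarith)
  have hd2 : dist (f^[n] u) xs ≤ δ0/2 := (Metric.mem_ball.mp hufU).le
  have htri := dist_triangle (f^[n] xs) (f^[n] u) xs
  linarith

/-- Gottschalk-type argument: every point's orbit approaches the uniformly recurrent
transitive point. -/
lemma aux_gott (hA : IsCompact A) (hcont : Continuous f) (hmaps : Set.MapsTo f A A)
    (hxs : xs ∈ A)
    (hdense : ∀ p ∈ A, ∀ r > 0, ∃ m : ℕ, dist (f^[m] xs) p ≤ r)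
    (hrec : ∀ ε > 0, ∃ K : ℕ, ∀ m : ℕ, ∃ r : ℕ, m ≤ r ∧ r ≤ m + K ∧ dist (f^[r] xs) xs ≤ ε) :
    ∀ y ∈ A, ∀ ρ > 0, ∃ j : ℕ, dist (f^[j] y) xs ≤ ρ := by
  intro y hy ρ hρ
  obtain ⟨K, hK⟩ := hrec (ρ/3) (by positivity)
  obtain ⟨δ₀, hδ₀, hu⟩ := aux_iter_ucont hA hcont K (show (0:ℝ) < ρ/3 by positivity)
  obtain ⟨a, ha⟩ := hdense y hy δ₀ hδ₀
  obtain ⟨r, hr1, hr2, hr3⟩ := hK a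
  refine ⟨r - a, ?_⟩
  have hiter : f^[r-a] (f^[a] xs) = f^[r] xs := by
    rw [← Function.iterate_add_apply]; congr 1; omega
  calc dist (f^[r-a] y) xs
      ≤ dist (f^[r-a] y) (f^[r-a] (f^[a] xs)) + dist (f^[r-a] (f^[a] xs)) xs :=
        dist_triangle _ _ _
    _ ≤ ρ/3 + ρ/3 := by
        gcongr
        · exact hu (r-a) (by omega) y hy (f^[a] xs) (hmaps.iterate a hxs)
            (by rwa [dist_comm] at ha)
        · rw [hiter]; exact hr3
    _ ≤ ρ := by linarith

/-- Every orbit is dense. -/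
lemma aux_orbitdense (hA : IsCompact A) (hcont : Continuous f) (hmaps : Set.MapsTo f A A)
    (hxs : xs ∈ A)
    (hdense : ∀ p ∈ A, ∀ r > 0, ∃ m : ℕ, dist (f^[m] xs) p ≤ r)
    (hgott : ∀ y ∈ A, ∀ ρ > 0, ∃ j : ℕ, dist (f^[j] y) xs ≤ ρ) :
    ∀ y ∈ A, ∀ p ∈ A, ∀ ρ > 0, ∃ j : ℕ, dist (f^[j] y) p ≤ ρ := by
  intro y hy p hp ρ hρ
  obtain ⟨m, hm⟩ := hdense p hp (ρ/2) (by positivity)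
  obtain ⟨δ₁, hδ₁, hu⟩ := aux_iter_ucont hA hcont m (show (0:ℝ) < ρ/2 by positivity)
  obtain ⟨j, hj⟩ := hgott y hy δ₁ hδ₁
  refine ⟨m + j, ?_⟩
  have hiter : f^[m + j] y = f^[m] (f^[j] y) := Function.iterate_add_apply f m j y
  rw [hiter]
  calc dist (f^[m] (f^[j] y)) p ≤ dist (f^[m] (f^[j] y)) (f^[m] xs) + dist (f^[m] xs) p :=
        dist_triangle _ _ _
    _ ≤ ρ/2 + ρ/2 := add_le_add (hu m le_rfl (f^[j] y) (hmaps.iterate j hy) xs hxs hj) hm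
    _ = ρ := by ring

end Aux4

section Aux5

variable {X : Type*} [MetricSpace X] {f : X → X} {A : Set X} {xs : X}

/-- Uniform equicontinuity of the family of iterates on `A`. -/
lemma aux_equi (hA : IsCompact A) (hcont : Continuous f) (hmaps : Set.MapsTo f A A)
    (hxs : xs ∈ A)
    (hstabxs : ∀ ε > 0, ∃ δ > 0, ∀ y ∈ A, ∀ z ∈ A,
      dist xs y ≤ δ → dist xs z ≤ δ → ∀ n : ℕ, dist (f^[n] y) (f^[n] z) ≤ ε)
    (hgott : ∀ y ∈ A, ∀ ρ > 0, ∃ j : ℕ, dist (f^[j] y) xs ≤ ρ) :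
    ∀ ε > 0, ∃ η > 0, ∀ p ∈ A, ∀ q ∈ A, dist p q ≤ η →
      ∀ n : ℕ, dist (f^[n] p) (f^[n] q) ≤ ε := by
  intro ε hε
  obtain ⟨δ, hδ, hst⟩ := hstabxs (ε/4) (by positivity)
  have key : ∀ y ∈ A, ∃ ρ > 0, ∀ w ∈ A, dist y w ≤ ρ →
      ∀ n : ℕ, dist (f^[n] y) (f^[n] w) ≤ ε/2 := by
    intro y hy
    obtain ⟨N, hN⟩ := hgott y hy (δ/2) (by positivity)
    obtain ⟨ρ, hρ, hu⟩ := aux_iter_ucont hA hcont N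
      (show (0:ℝ) < min (δ/2) (ε/4) by positivity)
    refine ⟨ρ, hρ, fun w hw hd n => ?_⟩
    rcases le_or_gt n N with h | h
    · exact (hu n h y hy w hw hd).trans ((min_le_right _ _).trans (by linarith))
    · obtain ⟨j, rfl⟩ : ∃ j, n = j + N := ⟨n - N, by omega⟩
      have huN : dist (f^[N] y) (f^[N] w) ≤ min (δ/2) (ε/4) := hu N le_rfl y hy w hw hd
      have h1 : dist xs (f^[N] y) ≤ δ := by rw [dist_comm]; linarith
      have h2 : dist xs (f^[N] w) ≤ δ := by
        have := dist_triangle xs (f^[N] y) (f^[N] w)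
        have h3 : dist xs (f^[N] y) ≤ δ/2 := by rw [dist_comm]; exact hN
        have h4 : dist (f^[N] y) (f^[N] w) ≤ δ/2 := huN.trans (min_le_left _ _)
        linarith
      have := hst (f^[N] y) (hmaps.iterate N hy) (f^[N] w) (hmaps.iterate N hw) h1 h2 j
      rw [← Function.iterate_add_apply, ← Function.iterate_add_apply] at this
      exact this.trans (by linarith)
  classical
  choose! ρ hρpos hρ using key
  obtain ⟨t, htA, htcov⟩ := hA.elim_nhds_subcover (fun y => Metric.ball y (ρ y / 2))
    (fun y hy => Metric.ball_mem_nhds y (by have := hρpos y hy; positivity))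
  rcases t.eq_empty_or_nonempty with rfl | hte
  · refine ⟨1, one_pos, fun p hp => absurd (htcov hp) (by simp)⟩
  · refine ⟨t.inf' hte (fun y => ρ y / 2), ?_, ?_⟩
    · show (0:ℝ) < _
      rw [Finset.lt_inf'_iff]
      exact fun y hy => by have := hρpos y (htA y hy); positivity
    · intro p hp q hq hd n
      obtain ⟨y, hyt, hyp⟩ := Set.mem_iUnion₂.mp (htcov hp)
      have hyA := htA y hyt
      have hyp' : dist y p ≤ ρ y / 2 := by
        rw [dist_comm]; exact (Metric.mem_ball.mp hyp).le
      have hinfle : t.inf' hte (fun y => ρ y / 2) ≤ ρ y / 2 := Finset.inf'_le _ hyt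
      have hd1 : dist y p ≤ ρ y := hyp'.trans (by linarith [hρpos y hyA])
      have hd2 : dist y q ≤ ρ y := by
        have := dist_triangle y p q
        linarith
      calc dist (f^[n] p) (f^[n] q)
          ≤ dist (f^[n] p) (f^[n] y) + dist (f^[n] y) (f^[n] q) := dist_triangle _ _ _
        _ ≤ ε/2 + ε/2 := by
            refine add_le_add ?_ (hρ y hyA q hq hd2 n)
            rw [dist_comm]
            exact hρ y hyA p hp hd1 n
        _ = ε := by ring

/-- Some high iterate is uniformly close to the identity on `A`. -/
lemma aux_nearid (hA : IsCompact A) (hcont : Continuous f)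
    (hmaps : Set.MapsTo f A A)
    (himg : ∀ n : ℕ, f^[n] '' A = A)
    (hequi : ∀ ε > 0, ∃ η > 0, ∀ p ∈ A, ∀ q ∈ A, dist p q ≤ η →
      ∀ n : ℕ, dist (f^[n] p) (f^[n] q) ≤ ε) :
    ∀ ε > 0, ∀ K : ℕ, ∃ j : ℕ, K ≤ j ∧ ∀ x ∈ A, dist (f^[j] x) x ≤ ε := by
  intro ε hε K
  obtain ⟨η₀, hη₀, hequ⟩ := hequi (ε/4) (by positivity)
  set η := min η₀ (ε/2) with hηdef
  have hη : 0 < η := lt_min hη₀ (by positivity)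
  classical
  obtain ⟨t, htA, htcov⟩ := hA.elim_nhds_subcover (fun y => Metric.ball y (η/2))
    (fun y _ => Metric.ball_mem_nhds y (by positivity))
  have hpat : ∀ n : ℕ, ∀ s : ↥t, ∃ c : ↥t, f^[n] (s : X) ∈ Metric.ball (c : X) (η/2) := by
    intro n s
    have hsA : (s : X) ∈ A := htA _ s.2
    have hfA : f^[n] (s : X) ∈ A := hmaps.iterate n hsA
    obtain ⟨c, hct, hc⟩ := Set.mem_iUnion₂.mp (htcov hfA)
    exact ⟨⟨c, hct⟩, hc⟩
  choose pat hpatspec using hpat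
  obtain ⟨P, hPinf⟩ := Finite.exists_infinite_fiber pat
  have hPinf' : (pat ⁻¹' {P}).Infinite := Set.infinite_coe_iff.mp hPinf
  obtain ⟨n, hn⟩ := hPinf'.nonempty
  obtain ⟨n', hn', hgt⟩ := hPinf'.exists_gt (n + K)
  have hpn : pat n = P := hn
  have hpn' : pat n' = P := hn'
  refine ⟨n' - n, by omega, fun x hx => ?_⟩
  have hx' : x ∈ f^[n] '' A := by rw [himg n]; exact hx
  obtain ⟨w, hw, rfl⟩ := hx'
  obtain ⟨s, hst, hs⟩ := Set.mem_iUnion₂.mp (htcov hw)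
  have hsA : s ∈ A := htA s hst
  have hws : dist w s ≤ η₀ := by
    have := (Metric.mem_ball.mp hs).le
    have : dist w s ≤ η/2 := this
    calc dist w s ≤ η/2 := this
      _ ≤ η := by linarith
      _ ≤ η₀ := min_le_left _ _
  have hss' : dist (f^[n'] s) (f^[n] s) ≤ η := by
    have h1 := Metric.mem_ball.mp (hpatspec n ⟨s, hst⟩)
    have h2 := Metric.mem_ball.mp (hpatspec n' ⟨s, hst⟩)
    rw [hpn] at h1; rw [hpn'] at h2
    calc dist (f^[n'] s) (f^[n] s)
        ≤ dist (f^[n'] s) ((P ⟨s, hst⟩ : X)) + dist ((P ⟨s, hst⟩ : X)) (f^[n] s) :=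
          dist_triangle _ _ _
      _ ≤ η/2 + η/2 := add_le_add h2.le (by rw [dist_comm]; exact h1.le)
      _ = η := by ring
  have hiter : f^[n' - n] (f^[n] w) = f^[n'] w := by
    rw [← Function.iterate_add_apply]; congr 1; omega
  rw [hiter]
  have e1 : dist (f^[n'] w) (f^[n'] s) ≤ ε/4 := hequ w hw s hsA hws n'
  have e2 : dist (f^[n] s) (f^[n] w) ≤ ε/4 := by
    rw [dist_comm]; exact hequ w hw s hsA hws n
  have htri := dist_triangle4 (f^[n'] w) (f^[n'] s) (f^[n] s) (f^[n] w)
  have hηε : η ≤ ε/2 := min_le_right _ _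
  linarith

/-- Distality: distinct points never approach each other under iteration. -/
lemma aux_distal (hmaps : Set.MapsTo f A A)
    (hequi : ∀ ε > 0, ∃ η > 0, ∀ p ∈ A, ∀ q ∈ A, dist p q ≤ η →
      ∀ n : ℕ, dist (f^[n] p) (f^[n] q) ≤ ε)
    (hnearid : ∀ ε > 0, ∀ K : ℕ, ∃ j : ℕ, K ≤ j ∧ ∀ x ∈ A, dist (f^[j] x) x ≤ ε) :
    ∀ p ∈ A, ∀ q ∈ A, p ≠ q → ∃ c > 0, ∀ n : ℕ, c ≤ dist (f^[n] p) (f^[n] q) := by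
  intro p hp q hq hpq
  have hΔ : 0 < dist p q := dist_pos.mpr hpq
  set ε := dist p q / 8 with hεdef
  have hε : 0 < ε := by positivity
  obtain ⟨η, hη, hequ⟩ := hequi ε hε
  refine ⟨min η ε, lt_min hη hε, fun n => ?_⟩
  by_contra hcon
  push_neg at hcon
  obtain ⟨j, hj, hid⟩ := hnearid ε hε n
  have hfar : dist p q - 2*ε ≤ dist (f^[j] p) (f^[j] q) := by
    have h1 := hid p hp
    have h2 := hid q hq
    have htri := dist_triangle4 p (f^[j] p) (f^[j] q) q
    have hc1 : dist p (f^[j] p) ≤ ε := by rw [dist_comm]; exact h1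
    have hc2 : dist (f^[j] q) q ≤ ε := h2
    linarith
  have hnear : dist (f^[j] p) (f^[j] q) ≤ ε := by
    obtain ⟨m, rfl⟩ : ∃ m, j = m + n := ⟨j - n, by omega⟩
    have := hequ (f^[n] p) (hmaps.iterate n hp) (f^[n] q) (hmaps.iterate n hq)
      (hcon.le.trans (min_le_left _ _)) m
    rwa [← Function.iterate_add_apply, ← Function.iterate_add_apply] at this
  rw [hεdef] at hfar hnear
  linarith

end Aux5

section AuxRot

/-- A nonempty closed subset of the circle invariant under an irrational rotation
is everything. -/
lemma aux_rot_univ (ω : ℝ) (hω : Irrational ω) (C : Set (AddCircle (1 : ℝ)))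
    (hC : IsClosed C) (hne : C.Nonempty)
    (hCinv : (fun θ => θ + (ω : AddCircle (1 : ℝ))) '' C = C) :
    C = Set.univ := by
  obtain ⟨c, hc⟩ := hne
  set ωc : AddCircle (1 : ℝ) := (ω : AddCircle (1 : ℝ)) with hωc
  -- the subgroup generated by 1 and ω in ℝ is dense
  have hdense : Dense ((AddSubgroup.closure ({1, ω} : Set ℝ) : AddSubgroup ℝ) : Set ℝ) := by
    rcases (AddSubgroup.closure ({1, ω} : Set ℝ)).dense_or_cyclic with h | ⟨r, hr⟩
    · exact h
    · exfalso
      have h1 : (1 : ℝ) ∈ AddSubgroup.closure ({1, ω} : Set ℝ) :=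
        AddSubgroup.subset_closure (by simp)
      have h2 : ω ∈ AddSubgroup.closure ({1, ω} : Set ℝ) :=
        AddSubgroup.subset_closure (by simp)
      rw [hr, AddSubgroup.mem_closure_singleton] at h1 h2
      obtain ⟨n, hn⟩ := h1
      obtain ⟨m, hm⟩ := h2
      rw [zsmul_eq_mul] at hn hm
      have hn0 : (n : ℝ) ≠ 0 := by
        intro h; rw [h, zero_mul] at hn; exact one_ne_zero hn.symm
      have hkey : ω * (n : ℝ) = (m : ℝ) := by
        calc ω * (n : ℝ) = (m : ℝ) * r * (n : ℝ) := by rw [hm]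
          _ = (m : ℝ) * ((n : ℝ) * r) := by ring
          _ = (m : ℝ) * 1 := by rw [hn]
          _ = (m : ℝ) := by ring
      have : ω = (m : ℝ) / (n : ℝ) := by
        field_simp
        exact hkey
      refine hω ⟨(m : ℚ) / (n : ℚ), ?_⟩
      rw [this]
      push_cast
      ring
  -- its image in the circle consists of integer multiples of ω
  have hsub : ∀ x : ℝ, x ∈ AddSubgroup.closure ({1, ω} : Set ℝ) →
      ∃ n : ℤ, (x : AddCircle (1 : ℝ)) = n • ωc := by
    intro x hx
    refine AddSubgroup.closure_induction ?_ ?_ ?_ ?_ hx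
    · intro y hy
      rcases hy with rfl | hy
      · refine ⟨0, ?_⟩
        rw [zero_zsmul]
        exact AddCircle.coe_period (p := (1:ℝ))
      · rw [Set.mem_singleton_iff] at hy
        subst hy
        exact ⟨1, (one_zsmul _).symm⟩
    · exact ⟨0, by rw [zero_zsmul]; exact QuotientAddGroup.mk_zero _⟩
    · rintro y z _ _ ⟨ny, hy⟩ ⟨nz, hz⟩
      refine ⟨ny + nz, ?_⟩
      rw [AddCircle.coe_add, hy, hz, add_zsmul]
    · rintro y _ ⟨ny, hy⟩
      refine ⟨-ny, ?_⟩
      rw [QuotientAddGroup.mk_neg, hy, neg_zsmul]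
  -- multiples of ω are dense in the circle
  have hTdense : Dense {x : AddCircle (1 : ℝ) | ∃ n : ℤ, x = n • ωc} := by
    have hπ : Continuous ((↑) : ℝ → AddCircle (1 : ℝ)) := AddCircle.continuous_mk' 1
    have hsurj : Function.Surjective ((↑) : ℝ → AddCircle (1 : ℝ)) :=
      QuotientAddGroup.mk'_surjective _
    have h1 : Set.univ ⊆ closure (((↑) : ℝ → AddCircle (1 : ℝ)) ''
        ((AddSubgroup.closure ({1, ω} : Set ℝ) : AddSubgroup ℝ) : Set ℝ)) := by
      intro x _
      obtain ⟨y, rfl⟩ := hsurj x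
      have hmem : ((y : ℝ) : AddCircle (1:ℝ)) ∈ ((↑) : ℝ → AddCircle (1 : ℝ)) ''
          closure ((AddSubgroup.closure ({1, ω} : Set ℝ) : AddSubgroup ℝ) : Set ℝ) :=
        ⟨y, by rw [hdense.closure_eq]; trivial, rfl⟩
      exact image_closure_subset_closure_image hπ hmem
    have h2 : (((↑) : ℝ → AddCircle (1 : ℝ)) ''
        ((AddSubgroup.closure ({1, ω} : Set ℝ) : AddSubgroup ℝ) : Set ℝ)) ⊆
        {x : AddCircle (1 : ℝ) | ∃ n : ℤ, x = n • ωc} := by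
      rintro x ⟨y, hy, rfl⟩
      exact hsub y hy
    intro x
    exact closure_mono h2 (h1 (Set.mem_univ x))
  -- C contains the orbit of c
  have horb : ∀ n : ℤ, c + n • ωc ∈ C := by
    have hfwd : ∀ θ, θ ∈ C → θ + ωc ∈ C := by
      intro θ hθ
      rw [← hCinv]
      exact Set.mem_image_of_mem _ hθ
    have hbwd : ∀ θ, θ ∈ C → θ - ωc ∈ C := by
      intro θ hθ
      rw [← hCinv] at hθ
      obtain ⟨θ', hθ', hθeq⟩ := hθ
      have heq : θ - ωc = θ' := sub_eq_iff_eq_add.mpr hθeq.symm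
      rwa [heq]
    intro n
    induction n using Int.induction_on with
    | zero => simpa using hc
    | succ k ih =>
      have h := hfwd _ ih
      have heq : c + ((k : ℤ) + 1) • ωc = c + (k : ℤ) • ωc + ωc := by
        rw [add_zsmul, one_zsmul, add_assoc]
      rwa [heq]
    | pred k ih =>
      have h := hbwd _ ih
      have heq : c + (-(k : ℤ) - 1) • ωc = c + (-(k : ℤ)) • ωc - ωc := by
        rw [sub_zsmul, one_zsmul, add_sub_assoc]
        abel
      rwa [heq]
  -- conclude
  have hDsub : ((c + ·) '' {x : AddCircle (1 : ℝ) | ∃ n : ℤ, x = n • ωc}) ⊆ C := by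
    rintro x ⟨y, ⟨n, rfl⟩, rfl⟩
    exact horb n
  have hDdense : Dense ((c + ·) '' {x : AddCircle (1 : ℝ) | ∃ n : ℤ, x = n • ωc}) := by
    have h2 : closure ((c + ·) '' {x : AddCircle (1 : ℝ) | ∃ n : ℤ, x = n • ωc})
        = (c + ·) '' closure {x : AddCircle (1 : ℝ) | ∃ n : ℤ, x = n • ωc} :=
      ((Homeomorph.addLeft c).image_closure _).symm
    rw [Dense, ← Set.eq_univ_iff_forall, h2, hTdense.closure_eq, Set.image_univ]
    refine Set.eq_univ_of_forall (fun x => ⟨x - c, ?_⟩)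
    show c + (x - c) = x
    abel
  have : Dense C := hDdense.mono hDsub
  rw [← hC.closure_eq]
  exact this.closure_eq

end AuxRot

/-- For a quasiperiodically forced monotone interval map over an
irrational rotation and a compact invariant set `𝒜` without isolated points on
which `f` is transitive and supports a fully-supported finite invariant measure:
either `f|𝒜` has sensitive dependence on initial conditions or `𝒜` is the graph of
a continuous function. -/
theorem monotone_interval_dichotomy
    (ω : ℝ) (hω : Irrational ω) (a b : ℝ) (hab : a ≤ b)
    (F : AddCircle (1 : ℝ) → ℝ → ℝ)
    (hFmono : ∀ θ, MonotoneOn (F θ) (Set.Icc a b))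
    (hFmaps : ∀ θ, Set.MapsTo (F θ) (Set.Icc a b) (Set.Icc a b))
    (f : AddCircle (1 : ℝ) × ℝ → AddCircle (1 : ℝ) × ℝ)
    (hf : ∀ p, f p = (p.1 + (ω : AddCircle (1 : ℝ)), F p.1 p.2))
    (hcont : Continuous f)
    (A : Set (AddCircle (1 : ℝ) × ℝ)) (hAsub : A ⊆ Set.univ ×ˢ Set.Icc a b)
    (hA : IsCompact A) (hinv : f '' A = A)
    (hiso : ∀ x ∈ A, x ∈ closure (A \ {x}))
    (htrans : ∃ x ∈ A, A ⊆ closure (Set.range fun n : ℕ => f^[n] x))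
    (μ : Measure (AddCircle (1 : ℝ) × ℝ)) [IsFiniteMeasure μ]
    (hμinv : ∀ s, MeasurableSet s → μ (f ⁻¹' s) = μ s)
    (hμA : μ Aᶜ = 0)
    (hμfull : ∀ U : Set (AddCircle (1 : ℝ) × ℝ), IsOpen U → (U ∩ A).Nonempty → 0 < μ U) :
    (∃ ε > 0, ∀ x ∈ A, ∀ δ > 0, ∃ y ∈ A, ∃ z ∈ A,
        dist x y ≤ δ ∧ dist x z ≤ δ ∧ ∃ n : ℕ, ε ≤ dist (f^[n] y) (f^[n] z)) ∨
    (∃ ψ : AddCircle (1 : ℝ) → ℝ, Continuous ψ ∧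
        A = {p : AddCircle (1 : ℝ) × ℝ | p.2 = ψ p.1}) := by
  rcases Classical.em (∃ ε > 0, ∀ x ∈ A, ∀ δ > 0, ∃ y ∈ A, ∃ z ∈ A,
      dist x y ≤ δ ∧ dist x z ≤ δ ∧ ∃ n : ℕ, ε ≤ dist (f^[n] y) (f^[n] z)) with hs | hns
  · exact Or.inl hs
  right
  set ωc : AddCircle (1 : ℝ) := (ω : AddCircle (1 : ℝ)) with hωcdef
  obtain ⟨xs, hxsA, hxsd⟩ := htrans
  have hmaps : Set.MapsTo f A A := fun x hx => hinv ▸ Set.mem_image_of_mem f hx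
  have himg : ∀ n : ℕ, f^[n] '' A = A := by
    intro n
    induction n with
    | zero => simp
    | succ n ih =>
      rw [Function.iterate_succ, Set.image_comp, hinv, ih]
  have hdense : ∀ p ∈ A, ∀ r > 0, ∃ m : ℕ, dist (f^[m] xs) p ≤ r := by
    intro p hp r hr
    have hcl := hxsd hp
    rw [Metric.mem_closure_iff] at hcl
    obtain ⟨q, ⟨m, rfl⟩, hq⟩ := hcl r hr
    exact ⟨m, by rw [dist_comm]; exact hq.le⟩
  push_neg at hns
  have hstab : ∀ ε > 0, ∃ x ∈ A, ∃ δ > 0, ∀ y ∈ A, ∀ z ∈ A,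
      dist x y ≤ δ → dist x z ≤ δ → ∀ n : ℕ, dist (f^[n] y) (f^[n] z) < ε := hns
  have hstabxs := aux_stable hA hcont hmaps hxsA hdense hstab
  have hball : ∀ r > 0, 0 < μ (Metric.ball xs r) := fun r hr =>
    hμfull _ Metric.isOpen_ball ⟨xs, Metric.mem_ball_self hr, hxsA⟩
  have hrec := aux_recur hcont hxsA μ hμinv hμA hball hstabxs
  have hgott := aux_gott hA hcont hmaps hxsA hdense hrec
  have horbd := aux_orbitdense hA hcont hmaps hxsA hdense hgott
  have hequi := aux_equi hA hcont hmaps hxsA hstabxs hgott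
  have hnearid := aux_nearid hA hcont hmaps himg hequi
  have hdistal := aux_distal hmaps hequi hnearid
  -- fibers of A
  set Fib : AddCircle (1 : ℝ) → Set ℝ := fun θ => {t | (θ, t) ∈ A} with hFibdef
  have hFibIcc : ∀ θ, Fib θ ⊆ Set.Icc a b := fun θ t ht => (hAsub ht).2
  have hFibclosed : ∀ θ, IsClosed (Fib θ) := fun θ =>
    IsClosed.preimage (Continuous.prodMk_right θ) hA.isClosed
  have hFibcpt : ∀ θ, IsCompact (Fib θ) :=
    fun θ => IsCompact.of_isClosed_subset isCompact_Icc (hFibclosed θ) (hFibIcc θ)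
  have hFibbddA : ∀ θ, BddAbove (Fib θ) := fun θ => bddAbove_Icc.mono (hFibIcc θ)
  have hFibbddB : ∀ θ, BddBelow (Fib θ) := fun θ => bddBelow_Icc.mono (hFibIcc θ)
  -- the projection of A is everything
  have hproj : Prod.fst '' A = Set.univ := by
    refine aux_rot_univ ω hω _ ((hA.image continuous_fst).isClosed) ⟨xs.1, xs, hxsA, rfl⟩ ?_
    have himgs : (fun θ => θ + ωc) '' (Prod.fst '' A) = Prod.fst '' (f '' A) := by
      rw [Set.image_image, Set.image_image]
      refine Set.image_congr ?_
      intro p _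
      rw [hf]
    rw [himgs, hinv]
  have hFibne : ∀ θ, (Fib θ).Nonempty := by
    intro θ
    have hθ : θ ∈ Prod.fst '' A := by rw [hproj]; trivial
    obtain ⟨p, hp, hpe⟩ := hθ
    refine ⟨p.2, ?_⟩
    show (θ, p.2) ∈ A
    rw [← hpe]
    simpa using hp
  set φp : AddCircle (1 : ℝ) → ℝ := fun θ => sSup (Fib θ) with hφpdef
  set φm : AddCircle (1 : ℝ) → ℝ := fun θ => sInf (Fib θ) with hφmdef
  have hφpmem : ∀ θ, φp θ ∈ Fib θ := fun θ => (hFibcpt θ).sSup_mem (hFibne θ)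
  have hφmmem : ∀ θ, φm θ ∈ Fib θ := fun θ => (hFibcpt θ).sInf_mem (hFibne θ)
  have hφpA : ∀ θ, (θ, φp θ) ∈ A := fun θ => hφpmem θ
  have hφmA : ∀ θ, (θ, φm θ) ∈ A := fun θ => hφmmem θ
  -- fiber image identity
  have hfib_image : ∀ θ, Fib (θ + ωc) = F θ '' Fib θ := by
    intro θ
    ext t
    constructor
    · intro ht
      have htA : (θ + ωc, t) ∈ f '' A := by rw [hinv]; exact ht
      obtain ⟨p, hp, hfp⟩ := htA
      rw [hf] at hfp
      have h1 : p.1 + ωc = θ + ωc := congrArg Prod.fst hfp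
      have h1' : p.1 = θ := add_right_cancel h1
      have h2 : F p.1 p.2 = t := congrArg Prod.snd hfp
      refine ⟨p.2, ?_, ?_⟩
      · show (θ, p.2) ∈ A
        rw [← h1']
        simpa using hp
      · rw [← h1', h2]
    · rintro ⟨s, hs, rfl⟩
      have hsA : (θ, s) ∈ A := hs
      have := hmaps hsA
      rw [hf] at this
      exact this
  -- tops map to tops, bottoms to bottoms
  have htop : ∀ θ, f (θ, φp θ) = (θ + ωc, φp (θ + ωc)) := by
    intro θ
    rw [hf]
    simp only [Prod.mk.injEq]
    refine ⟨trivial, ?_⟩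
    have hgr : IsGreatest (F θ '' Fib θ) (F θ (φp θ)) := by
      constructor
      · exact Set.mem_image_of_mem _ (hφpmem θ)
      · rintro t ⟨s, hs, rfl⟩
        exact hFmono θ (hFibIcc θ hs) (hFibIcc θ (hφpmem θ)) (le_csSup (hFibbddA θ) hs)
    have : φp (θ + ωc) = sSup (F θ '' Fib θ) := by rw [hφpdef]; simp only; rw [hfib_image θ]
    rw [this, hgr.csSup_eq]
  have hbot : ∀ θ, f (θ, φm θ) = (θ + ωc, φm (θ + ωc)) := by
    intro θ
    rw [hf]
    simp only [Prod.mk.injEq]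
    refine ⟨trivial, ?_⟩
    have hgr : IsLeast (F θ '' Fib θ) (F θ (φm θ)) := by
      constructor
      · exact Set.mem_image_of_mem _ (hφmmem θ)
      · rintro t ⟨s, hs, rfl⟩
        exact hFmono θ (hFibIcc θ (hφmmem θ)) (hFibIcc θ hs) (csInf_le (hFibbddB θ) hs)
    have : φm (θ + ωc) = sInf (F θ '' Fib θ) := by rw [hφmdef]; simp only; rw [hfib_image θ]
    rw [this, hgr.csInf_eq]
  have hiter_tb : ∀ θ, ∀ n : ℕ, ∃ σ, f^[n] (θ, φp θ) = (σ, φp σ) ∧ f^[n] (θ, φm θ) = (σ, φm σ) := by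
    intro θ n
    induction n with
    | zero => exact ⟨θ, rfl, rfl⟩
    | succ n ih =>
      obtain ⟨σ, h1, h2⟩ := ih
      refine ⟨σ + ωc, ?_, ?_⟩
      · rw [Function.iterate_succ_apply', h1, htop σ]
      · rw [Function.iterate_succ_apply', h2, hbot σ]
  -- all fibers are singletons
  have hsing : ∀ θ, φm θ = φp θ := by
    by_contra hcon
    push_neg at hcon
    obtain ⟨θ₀, hθ₀⟩ := hcon
    have hle : φm θ₀ ≤ φp θ₀ := csInf_le_csSup (hFibne θ₀) (hFibbddB θ₀) (hFibbddA θ₀)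
    have hlt : φm θ₀ < φp θ₀ := lt_of_le_of_ne hle hθ₀
    set y : AddCircle (1:ℝ) × ℝ := (θ₀, φp θ₀) with hydef
    set z : AddCircle (1:ℝ) × ℝ := (θ₀, φm θ₀) with hzdef
    have hyA : y ∈ A := hφpA θ₀
    have hzA : z ∈ A := hφmA θ₀
    have hyz : y ≠ z := by
      intro h
      rw [hydef, hzdef, Prod.mk.injEq] at h
      exact (ne_of_lt hlt) h.2.symm
    obtain ⟨c, hc, hcd⟩ := hdistal y hyA z hzA hyz
    -- approach z along the orbit of y
    have happ : ∀ k : ℕ, ∃ σ, dist (σ, φp σ) z ≤ 1/(k+1) ∧ (σ, φm σ) ∈ A ∧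
        φm σ + c ≤ φp σ := by
      intro k
      obtain ⟨j, hj⟩ := horbd y hyA z hzA (1/(k+1)) (by positivity)
      obtain ⟨σ, h1, h2⟩ := hiter_tb θ₀ j
      refine ⟨σ, ?_, hφmA σ, ?_⟩
      · rw [← h1]; exact hj
      · have hd := hcd j
        rw [h1, h2] at hd
        have : dist ((σ, φp σ) : AddCircle (1:ℝ) × ℝ) (σ, φm σ) = |φp σ - φm σ| := by
          rw [Prod.dist_eq]
          simp [Real.dist_eq]
        rw [this] at hd
        have habs : φp σ - φm σ = |φp σ - φm σ| := by
          rw [abs_of_nonneg]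
          exact sub_nonneg.mpr (csInf_le_csSup (hFibne σ) (hFibbddB σ) (hFibbddA σ))
        linarith [le_abs_self (φp σ - φm σ), habs ▸ hd]
    choose σ hσz hσA hσgap using happ
    -- limits
    have hbase : Filter.Tendsto (fun k => (σ k : AddCircle (1:ℝ))) Filter.atTop (nhds θ₀) := by
      rw [tendsto_iff_dist_tendsto_zero]
      refine squeeze_zero (fun k => dist_nonneg) (fun k => ?_) tendsto_one_div_add_atTop_nhds_zero_nat
      calc dist (σ k) θ₀ ≤ dist ((σ k, φp (σ k)) : AddCircle (1:ℝ) × ℝ) z := by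
            rw [Prod.dist_eq]; exact le_max_left _ _
        _ ≤ 1/(k+1) := hσz k
    have htopv : Filter.Tendsto (fun k => φp (σ k)) Filter.atTop (nhds (φm θ₀)) := by
      rw [tendsto_iff_dist_tendsto_zero]
      refine squeeze_zero (fun k => dist_nonneg) (fun k => ?_) tendsto_one_div_add_atTop_nhds_zero_nat
      calc dist (φp (σ k)) (φm θ₀) ≤ dist ((σ k, φp (σ k)) : AddCircle (1:ℝ) × ℝ) z := by
            rw [Prod.dist_eq]; exact le_max_right _ _
        _ ≤ 1/(k+1) := hσz k
    -- extract a convergent subsequence of the bottom points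
    obtain ⟨p, hpA, κ, hκ, hκlim⟩ := hA.tendsto_subseq (x := fun k => ((σ k, φm (σ k)) : AddCircle (1:ℝ) × ℝ)) hσA
    have hp1 : p.1 = θ₀ := by
      have h1 : Filter.Tendsto (fun k => (σ (κ k) : AddCircle (1:ℝ))) Filter.atTop (nhds p.1) :=
        ((continuous_fst.tendsto p).comp hκlim)
      have h2 : Filter.Tendsto (fun k => (σ (κ k) : AddCircle (1:ℝ))) Filter.atTop (nhds θ₀) :=
        hbase.comp hκ.tendsto_atTop
      exact tendsto_nhds_unique h1 h2
    have hp2top : Filter.Tendsto (fun k => φm (σ (κ k))) Filter.atTop (nhds p.2) :=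
      ((continuous_snd.tendsto p).comp hκlim)
    have hp2le : p.2 ≤ φm θ₀ - c := by
      have hlim2 : Filter.Tendsto (fun k => φp (σ (κ k)) - c) Filter.atTop (nhds (φm θ₀ - c)) :=
        ((htopv.comp hκ.tendsto_atTop).sub tendsto_const_nhds)
      refine le_of_tendsto_of_tendsto hp2top hlim2 ?_
      filter_upwards with k
      linarith [hσgap (κ k)]
    have hpfib : p.2 ∈ Fib θ₀ := by
      rw [← hp1]
      show (p.1, p.2) ∈ A
      simpa using hpA
    have : φm θ₀ ≤ p.2 := csInf_le (hFibbddB θ₀) hpfib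
    linarith
  -- the graph map
  refine ⟨φp, ?_, ?_⟩
  · -- continuity
    rw [continuous_iff_continuousAt]
    intro θ
    rw [Metric.continuousAt_iff]
    by_contra h
    push_neg at h
    obtain ⟨ε, hε, hbad⟩ := h
    have hbad' : ∀ k : ℕ, ∃ θ', dist θ' θ < 1/(k+1) ∧ ε ≤ dist (φp θ') (φp θ) := by
      intro k
      exact hbad (1/(k+1)) (by positivity)
    choose θ' hθ'1 hθ'2 using hbad'
    have hqA : ∀ k, ((θ' k, φp (θ' k)) : AddCircle (1:ℝ) × ℝ) ∈ A := fun k => hφpA (θ' k)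
    obtain ⟨p, hpA, κ, hκ, hκlim⟩ := hA.tendsto_subseq (x := fun k => ((θ' k, φp (θ' k)) : AddCircle (1:ℝ) × ℝ)) hqA
    have hθ'lim : Filter.Tendsto (fun k => (θ' k : AddCircle (1:ℝ))) Filter.atTop (nhds θ) := by
      rw [tendsto_iff_dist_tendsto_zero]
      exact squeeze_zero (fun k => dist_nonneg) (fun k => (hθ'1 k).le)
        tendsto_one_div_add_atTop_nhds_zero_nat
    have hp1 : p.1 = θ := by
      have h1 : Filter.Tendsto (fun k => (θ' (κ k) : AddCircle (1:ℝ))) Filter.atTop (nhds p.1) :=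
        ((continuous_fst.tendsto p).comp hκlim)
      have h2 : Filter.Tendsto (fun k => (θ' (κ k) : AddCircle (1:ℝ))) Filter.atTop (nhds θ) :=
        hθ'lim.comp hκ.tendsto_atTop
      exact tendsto_nhds_unique h1 h2
    have hp2 : p.2 = φp θ := by
      have hpfib : p.2 ∈ Fib θ := by
        rw [← hp1]
        show (p.1, p.2) ∈ A
        simpa using hpA
      have h1 : p.2 ≤ φp θ := le_csSup (hFibbddA θ) hpfib
      have h2 : φm θ ≤ p.2 := csInf_le (hFibbddB θ) hpfib
      rw [hsing θ] at h2
      linarith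
    have hsndlim : Filter.Tendsto (fun k => φp (θ' (κ k))) Filter.atTop (nhds (φp θ)) := by
      have := (continuous_snd.tendsto p).comp hκlim
      rwa [hp2] at this
    rw [Metric.tendsto_atTop] at hsndlim
    obtain ⟨N, hN⟩ := hsndlim ε hε
    exact absurd (hN N le_rfl) (not_lt.mpr (hθ'2 (κ N)))
  · -- A is the graph of φp
    ext p
    constructor
    · intro hp
      have hpfib : p.2 ∈ Fib p.1 := by
        show (p.1, p.2) ∈ A
        simpa using hp
      have h1 : p.2 ≤ φp p.1 := le_csSup (hFibbddA p.1) hpfib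
      have h2 : φm p.1 ≤ p.2 := csInf_le (hFibbddB p.1) hpfib
      rw [hsing p.1] at h2
      exact le_antisymm h1 h2
    · intro hp
      have : (p.1, φp p.1) ∈ A := hφpA p.1
      have heq : p = (p.1, φp p.1) := by
        rw [Prod.ext_iff]
        exact ⟨rfl, hp⟩
      rwa [heq]
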